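/- The Vapnik–Chervonenkis (VC) dimension of the class of all d-dimensional ellipsoids in ℝ^d equals (d² + 3d)/2, for every positive integer d. -/

import Mathlib

open Matrix

/-- A class `C` of subsets of `α` shatters a set `X` if every subset of `X`
is cut out of `X` by some member of `C`. -/
def Shatters {α : Type*} (C : Set (Set α)) (X : Set α) : Prop :=
  ∀ Y ⊆ X, ∃ B ∈ C, Y = X ∩ B

/-- The VC dimension of a class `C` of subsets: the supremum (in `ℕ∞`) of the
cardinalities of finite sets shattered by `C`. -/
noncomputable def vcDim {α : Type*} (C : Set (Set α)) : ℕ∞ :=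
  ⨆ (X : Finset α) (_ : Shatters C (X : Set α)), (X.card : ℕ∞)

/-- A `d`-dimensional ellipsoid: `{x ∈ ℝ^d : (x-μ)ᵀ A (x-μ) < 1}` for a center
`μ ∈ ℝ^d` and a (symmetric) positive definite matrix `A`. -/
def IsEllipsoid {d : ℕ} (E : Set (Fin d → ℝ)) : Prop :=
  ∃ (μ : Fin d → ℝ) (A : Matrix (Fin d) (Fin d) ℝ), A.PosDef ∧
    E = {x | (x - μ) ⬝ᵥ A.mulVec (x - μ) < 1}


section Aux
open Finset
variable {d : ℕ}

abbrev QIdx (d : ℕ) := {p : Fin d × Fin d // p.1 ≤ p.2} ⊕ (Fin d ⊕ Unit)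

def phiF (x : Fin d → ℝ) : QIdx d → ℝ
  | .inl p => x p.1.1 * x p.1.2
  | .inr (.inl i) => x i
  | .inr (.inr _) => 1

def coeffs (A : Matrix (Fin d) (Fin d) ℝ) (b : Fin d → ℝ) (c : ℝ) : QIdx d → ℝ
  | .inl p => if p.1.1 = p.1.2 then A p.1.1 p.1.1 else A p.1.1 p.1.2 + A p.1.2 p.1.1
  | .inr (.inl i) => b i
  | .inr (.inr _) => c

def tvec (d : ℕ) : QIdx d → ℝ
  | .inl p => if p.1.1 = p.1.2 then 1 else 0
  | _ => 0

lemma card_QIdx : Fintype.card (QIdx d) = d * (d + 1) / 2 + d + 1 := by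
  rw [Fintype.card_sum, Fintype.card_sum, ← Fintype.card_congr (Sym2.sortEquiv (α := Fin d)),
    Sym2.card]
  simp only [Fintype.card_fin, Fintype.card_unit, Nat.choose_two_right, Nat.add_sub_cancel]
  rw [Nat.mul_comm]
  omega

lemma sum_le_split (F : Fin d × Fin d → ℝ) :
    ∑ p ∈ univ.filter (fun p : Fin d × Fin d => p.1 ≤ p.2), F p =
      ∑ p ∈ univ.filter (fun p : Fin d × Fin d => p.1 < p.2), F p +
      ∑ p ∈ univ.filter (fun p : Fin d × Fin d => p.1 = p.2), F p := by
  rw [← Finset.sum_filter_add_sum_filter_not (univ.filter (fun p : Fin d × Fin d => p.1 ≤ p.2))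
      (fun p => p.1 = p.2) F]
  rw [add_comm]
  congr 1
  · congr 1; ext p
    simp only [mem_filter, mem_univ, true_and, and_iff_right_iff_imp]
    constructor
    · rintro ⟨h1, h2⟩; exact lt_of_le_of_ne h1 h2
    · intro h; exact ⟨le_of_lt h, ne_of_lt h⟩
  · congr 1; ext p
    simp only [mem_filter, mem_univ, true_and, and_iff_right_iff_imp]
    exact fun h => le_of_eq h

lemma sum_gt_swap (F : Fin d × Fin d → ℝ) :
    ∑ p ∈ univ.filter (fun p : Fin d × Fin d => ¬ p.1 ≤ p.2), F p =
      ∑ p ∈ univ.filter (fun p : Fin d × Fin d => p.1 < p.2), F p.swap := by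
  refine Finset.sum_nbij' (fun p => p.swap) (fun p => p.swap) ?_ ?_ ?_ ?_ ?_
  · intro a ha
    simp only [mem_filter, mem_univ, true_and, not_le] at ha ⊢
    exact ha
  · intro a ha
    simp only [mem_filter, mem_univ, true_and, not_le] at ha ⊢
    exact ha
  · intro a _; exact Prod.swap_swap a
  · intro a _; exact Prod.swap_swap a
  · intro a _; rfl

lemma sum_diag' (F : Fin d × Fin d → ℝ) :
    ∑ p ∈ univ.filter (fun p : Fin d × Fin d => p.1 = p.2), F p = ∑ i : Fin d, F (i, i) := by
  refine Finset.sum_nbij' (fun p => p.1) (fun i => (i, i)) ?_ ?_ ?_ ?_ ?_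
  · intro a _; exact mem_univ _
  · intro a _; simp
  · intro a ha
    simp only [mem_filter, mem_univ, true_and] at ha
    ext <;> simp [ha]
  · intro a _; rfl
  · intro a ha
    simp only [mem_filter, mem_univ, true_and] at ha
    rw [show ((a.1 : Fin d), a.1) = a by ext <;> simp [ha]]

lemma quad_sum (A : Matrix (Fin d) (Fin d) ℝ) (hA : Aᵀ = A) (x : Fin d → ℝ) :
    (∑ p : {p : Fin d × Fin d // p.1 ≤ p.2},
      (if p.1.1 = p.1.2 then A p.1.1 p.1.1 else A p.1.1 p.1.2 + A p.1.2 p.1.1) *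
        (x p.1.1 * x p.1.2)) = x ⬝ᵥ A.mulVec x := by
  classical
  set F : Fin d × Fin d → ℝ := fun p => A p.1 p.2 * (x p.1 * x p.2) with hF
  have hrhs : x ⬝ᵥ A.mulVec x = ∑ p : Fin d × Fin d, F p := by
    rw [Fintype.sum_prod_type]
    simp only [dotProduct, mulVec, dotProduct, Finset.mul_sum, hF]
    exact Finset.sum_congr rfl fun i _ => Finset.sum_congr rfl fun j _ => by ring
  have hsub : (∑ p : {p : Fin d × Fin d // p.1 ≤ p.2},
      (if p.1.1 = p.1.2 then A p.1.1 p.1.1 else A p.1.1 p.1.2 + A p.1.2 p.1.1) *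
        (x p.1.1 * x p.1.2)) =
      ∑ p ∈ univ.filter (fun p : Fin d × Fin d => p.1 ≤ p.2),
        (if p.1 = p.2 then A p.1 p.1 else A p.1 p.2 + A p.2 p.1) * (x p.1 * x p.2) :=
    (Finset.sum_subtype (univ.filter (fun p : Fin d × Fin d => p.1 ≤ p.2)) (by simp)
      (fun p : Fin d × Fin d => (if p.1 = p.2 then A p.1 p.1 else A p.1 p.2 + A p.2 p.1) *
        (x p.1 * x p.2))).symm
  rw [hsub, hrhs, ← Finset.sum_filter_add_sum_filter_not univ
      (fun p : Fin d × Fin d => p.1 ≤ p.2) F, sum_gt_swap, sum_le_split, sum_le_split F]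
  have h1 : ∑ p ∈ univ.filter (fun p : Fin d × Fin d => p.1 = p.2),
      (if p.1 = p.2 then A p.1 p.1 else A p.1 p.2 + A p.2 p.1) * (x p.1 * x p.2) =
      ∑ p ∈ univ.filter (fun p : Fin d × Fin d => p.1 = p.2), F p := by
    refine Finset.sum_congr rfl fun p hp => ?_
    simp only [mem_filter] at hp
    rw [if_pos hp.2, hF]; simp [← hp.2]
  have h2 : ∑ p ∈ univ.filter (fun p : Fin d × Fin d => p.1 < p.2),
      (if p.1 = p.2 then A p.1 p.1 else A p.1 p.2 + A p.2 p.1) * (x p.1 * x p.2) =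
      ∑ p ∈ univ.filter (fun p : Fin d × Fin d => p.1 < p.2), (F p + F p.swap) := by
    refine Finset.sum_congr rfl fun p hp => ?_
    simp only [mem_filter] at hp
    rw [if_neg (ne_of_lt hp.2), hF]
    simp only [Prod.fst_swap, Prod.snd_swap]
    ring
  rw [h1, h2, Finset.sum_add_distrib]
  ring

lemma tvec_dot (A : Matrix (Fin d) (Fin d) ℝ) (b : Fin d → ℝ) (c : ℝ) :
    tvec d ⬝ᵥ coeffs A b c = A.trace := by
  classical
  rw [dotProduct, Fintype.sum_sum_type, Fintype.sum_sum_type]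
  have h0 : ∀ i : Fin d, tvec d (.inr (.inl i)) * coeffs A b c (.inr (.inl i)) = 0 := by
    intro i; simp [tvec]
  have h0' : ∀ u : Unit, tvec d (.inr (.inr u)) * coeffs A b c (.inr (.inr u)) = 0 := by
    intro u; simp [tvec]
  simp only [h0, h0', Finset.sum_const_zero, add_zero]
  have key : ∀ p : {p : Fin d × Fin d // p.1 ≤ p.2},
      tvec d (.inl p) * coeffs A b c (.inl p)
        = if (p : Fin d × Fin d).1 = (p : Fin d × Fin d).2 then A p.1.1 p.1.1 else 0 := by
    intro p
    by_cases h : p.1.1 = p.1.2 <;> simp [tvec, coeffs, h]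
  rw [Finset.sum_congr rfl fun p _ => key p,
    ← Finset.sum_subtype (univ.filter (fun p : Fin d × Fin d => p.1 ≤ p.2)) (by simp)
      (fun p : Fin d × Fin d => if p.1 = p.2 then A p.1 p.1 else 0)]
  rw [Finset.sum_filter]
  have : ∀ a : Fin d × Fin d,
      (if a.1 ≤ a.2 then if a.1 = a.2 then A a.1 a.1 else 0 else 0)
        = if a.1 = a.2 then A a.1 a.1 else 0 := by
    intro a
    by_cases h : a.1 = a.2
    · rw [if_pos h, if_pos (le_of_eq h)]
    · by_cases h' : a.1 ≤ a.2 <;> simp [h, h']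
  rw [Finset.sum_congr rfl fun a _ => this a, ← Finset.sum_filter, sum_diag']
  simp [Matrix.trace, Matrix.diag]

end Aux

section Aux2
open Finset
variable {d : ℕ}
lemma sum_dot {ι κ : Type*} [Fintype κ] (s : Finset ι) (f : ι → κ → ℝ) (w : κ → ℝ) :
    (∑ i ∈ s, f i) ⬝ᵥ w = ∑ i ∈ s, f i ⬝ᵥ w := by
  simp only [dotProduct, Finset.sum_apply, Finset.sum_mul]
  exact Finset.sum_comm

lemma coeffs_dot_phi (A : Matrix (Fin d) (Fin d) ℝ) (hA : Aᵀ = A) (b : Fin d → ℝ) (c : ℝ)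
    (x : Fin d → ℝ) :
    coeffs A b c ⬝ᵥ phiF x = x ⬝ᵥ A.mulVec x + b ⬝ᵥ x + c := by
  rw [dotProduct, Fintype.sum_sum_type, Fintype.sum_sum_type]
  have h1 : (∑ p : {p : Fin d × Fin d // p.1 ≤ p.2},
      coeffs A b c (.inl p) * phiF x (.inl p)) = x ⬝ᵥ A.mulVec x := by
    rw [← quad_sum A hA x]
    rfl
  have h2 : (∑ i : Fin d, coeffs A b c (.inr (.inl i)) * phiF x (.inr (.inl i))) = b ⬝ᵥ x := rfl
  have h3 : (∑ u : Unit, coeffs A b c (.inr (.inr u)) * phiF x (.inr (.inr u))) = c := by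
    simp [coeffs, phiF]
  rw [h1, h2, h3, add_assoc]

lemma trace_pos_of_posDef (hd : 0 < d) {A : Matrix (Fin d) (Fin d) ℝ} (hA : A.PosDef) :
    0 < A.trace := by
  have : ∀ i : Fin d, 0 < A i i := by
    intro i
    have h := hA.dotProduct_mulVec_pos (x := Pi.single i 1) (by
      intro h
      have := congrFun h i
      simp at this)
    simpa [star, mulVec_single, dotProduct_single] using h
  have : 0 < ∑ i : Fin d, A i i :=
    Finset.sum_pos (fun i _ => this i) ⟨⟨0, hd⟩, Finset.mem_univ _⟩
  simpa [Matrix.trace, Matrix.diag] using this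

lemma exists_normalized (hd : 0 < d) {E : Set (Fin d → ℝ)} (hE : IsEllipsoid E) :
    ∃ w : QIdx d → ℝ, tvec d ⬝ᵥ w = 1 ∧ ∀ x, (x ∈ E ↔ w ⬝ᵥ phiF x < 0) := by
  obtain ⟨μ, A, hA, rfl⟩ := hE
  have hsym : Aᵀ = A := hA.1
  have ht : (0:ℝ) < A.trace := trace_pos_of_posDef hd hA
  set b : Fin d → ℝ := -(2 • A.mulVec μ) with hb
  set c : ℝ := μ ⬝ᵥ A.mulVec μ - 1 with hc
  refine ⟨(A.trace)⁻¹ • coeffs A b c, ?_, ?_⟩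
  · rw [dotProduct_smul, tvec_dot, smul_eq_mul, inv_mul_cancel₀ (ne_of_gt ht)]
  · intro x
    have hexp : coeffs A b c ⬝ᵥ phiF x = (x - μ) ⬝ᵥ A.mulVec (x - μ) - 1 := by
      rw [coeffs_dot_phi A hsym b c x]
      have hmv : μ ⬝ᵥ A.mulVec x = (A.mulVec μ) ⬝ᵥ x := by
        rw [dotProduct_mulVec]
        rw [show μ ᵥ* A = A.mulVec μ by rw [← vecMul_transpose]; rw [hsym]]
      have hxy : x ⬝ᵥ A.mulVec μ = (A.mulVec μ) ⬝ᵥ x := dotProduct_comm _ _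
      rw [Matrix.mulVec_sub, dotProduct_sub, sub_dotProduct, sub_dotProduct]
      rw [hmv, hxy, hb, hc]
      simp only [neg_dotProduct, smul_dotProduct]
      ring_nf
    rw [smul_dotProduct, hexp]
    simp only [Set.mem_setOf_eq, smul_eq_mul]
    have hti : (0:ℝ) < (A.trace)⁻¹ := inv_pos.2 ht
    constructor
    · intro h; nlinarith
    · intro h; nlinarith

lemma tvec_ne_zero (hd : 0 < d) : tvec d ≠ 0 := by
  intro h
  have := congrFun h (.inl ⟨(⟨0, hd⟩, ⟨0, hd⟩), le_refl _⟩)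
  simp [tvec] at this

/-- Upper bound: a set shattered by ellipsoids has at most `d(d+3)/2` points. -/
lemma card_le_of_shatters (hd : 0 < d) (X : Finset (Fin d → ℝ))
    (hX : Shatters {E : Set (Fin d → ℝ) | IsEllipsoid E} (X : Set (Fin d → ℝ))) :
    X.card ≤ (d ^ 2 + 3 * d) / 2 := by
  classical
  by_contra hcard
  push_neg at hcard
  set n := X.card with hn
  set N := Fintype.card (QIdx d) with hN
  have hNval : N = d * (d + 1) / 2 + d + 1 := card_QIdx
  have hnN : N ≤ n := by
    have hev : ∃ k, d * (d + 1) = 2 * k := by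
      rcases Nat.even_mul_succ_self d with ⟨k, hk⟩
      exact ⟨k, by omega⟩
    obtain ⟨k, hk⟩ := hev
    have hsq : d ^ 2 + d = d * (d + 1) := by ring
    omega
  -- enumerate the points of X
  set e := X.equivFin with he
  set pt : Fin n → (Fin d → ℝ) := fun i => (e.symm i : Fin d → ℝ) with hpt
  have hptX : ∀ i, pt i ∈ X := fun i => (e.symm i).2
  have hptinj : Function.Injective pt :=
    fun i j hij => (Equiv.symm e).injective (Subtype.coe_injective hij)
  -- for each index subset, a normalized quadratic vector
  have hw : ∀ S : Set (Fin n), ∃ w : QIdx d → ℝ, tvec d ⬝ᵥ w = 1 ∧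
      ∀ i, (i ∈ S → w ⬝ᵥ phiF (pt i) < 0) ∧ (i ∉ S → 0 ≤ w ⬝ᵥ phiF (pt i)) := by
    intro S
    obtain ⟨B, hB, hYB⟩ := hX (pt '' S) (by
      rintro z ⟨i, _, rfl⟩; exact hptX i)
    obtain ⟨w, hw1, hw2⟩ := exists_normalized hd hB
    refine ⟨w, hw1, fun i => ⟨fun hi => ?_, fun hi => ?_⟩⟩
    · have : pt i ∈ pt '' S := ⟨i, hi, rfl⟩
      rw [hYB] at this
      exact (hw2 (pt i)).1 this.2
    · by_contra hlt
      push_neg at hlt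
      have : pt i ∈ (X : Set (Fin d → ℝ)) ∩ B := ⟨hptX i, (hw2 (pt i)).2 hlt⟩
      rw [← hYB] at this
      obtain ⟨j, hj, hji⟩ := this
      exact hi (hptinj hji ▸ hj)
  -- the n+1 vectors are dependent
  have hdep : ¬ LinearIndependent ℝ
      (fun i : Fin (n+1) => Fin.lastCases (motive := fun _ => QIdx d → ℝ) (tvec d) (fun j => phiF (pt j)) i) := by
    intro hli
    have := hli.fintype_card_le_finrank
    rw [Module.finrank_pi, Fintype.card_fin] at this
    omega
  rw [Fintype.not_linearIndependent_iff] at hdep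
  obtain ⟨g, hg0, i₀, hgi₀⟩ := hdep
  set γ : Fin n → ℝ := fun i => g i.castSucc with hγ
  set β : ℝ := g (Fin.last n) with hβ
  have hsum : (∑ i : Fin n, γ i • phiF (pt i)) + β • tvec d = 0 := by
    rw [← hg0, Fin.sum_univ_castSucc]
    congr 1
    · exact Finset.sum_congr rfl fun i _ => by rw [hγ]; simp
    · rw [hβ]; simp
  -- key evaluation identity
  have hkey : ∀ w : QIdx d → ℝ, tvec d ⬝ᵥ w = 1 →
      (∑ i : Fin n, γ i * (w ⬝ᵥ phiF (pt i))) = -β := by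
    intro w hw1
    have := congrArg (fun v => v ⬝ᵥ w) hsum
    simp only [add_dotProduct, zero_dotProduct] at this
    rw [sum_dot, smul_dotProduct, smul_eq_mul, hw1] at this
    simp only [smul_dotProduct, smul_eq_mul] at this
    have heq : ∀ i : Fin n, γ i * (phiF (pt i) ⬝ᵥ w) = γ i * (w ⬝ᵥ phiF (pt i)) :=
      fun i => by rw [dotProduct_comm]
    rw [Finset.sum_congr rfl fun i _ => heq i] at this
    linarith
  -- γ is not identically zero
  have hγne : ∃ i, γ i ≠ 0 := by
    by_contra hall
    push_neg at hall
    have hβ0 : β ≠ 0 := by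
      rcases Fin.eq_castSucc_or_eq_last i₀ with ⟨j, rfl⟩ | rfl
      · exact absurd (hall j) hgi₀
      · exact hgi₀
    have : β • tvec d = 0 := by
      rw [← hsum]
      simp [hall]
    exact hβ0 (by
      rcases smul_eq_zero.1 this with h | h
      · exact h
      · exact absurd h (tvec_ne_zero hd))
  obtain ⟨i₀', hγi₀⟩ := hγne
  -- two specific subsets
  obtain ⟨w₁, hw₁t, hw₁⟩ := hw {i | γ i ≤ 0}
  obtain ⟨w₂, hw₂t, hw₂⟩ := hw {i | 0 < γ i}
  have hE₁ : (∑ i : Fin n, γ i * (w₁ ⬝ᵥ phiF (pt i))) = -β := hkey w₁ hw₁t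
  have hE₂ : (∑ i : Fin n, γ i * (w₂ ⬝ᵥ phiF (pt i))) = -β := hkey w₂ hw₂t
  have h1nonneg : ∀ i : Fin n, 0 ≤ γ i * (w₁ ⬝ᵥ phiF (pt i)) := by
    intro i
    by_cases h : γ i ≤ 0
    · exact mul_nonneg_of_nonpos_of_nonpos h (le_of_lt ((hw₁ i).1 h))
    · push_neg at h
      exact mul_nonneg (le_of_lt h) ((hw₁ i).2 (by simpa using h))
  have h2nonpos : ∀ i : Fin n, γ i * (w₂ ⬝ᵥ phiF (pt i)) ≤ 0 := by
    intro i
    by_cases h : 0 < γ i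
    · exact le_of_lt (mul_neg_of_pos_of_neg h ((hw₂ i).1 h))
    · push_neg at h
      exact mul_nonpos_of_nonpos_of_nonneg h ((hw₂ i).2 (by simpa using h))
  rcases lt_trichotomy (γ i₀') 0 with hlt | heq | hgt
  · have : 0 < ∑ i : Fin n, γ i * (w₁ ⬝ᵥ phiF (pt i)) :=
      Finset.sum_pos' (fun i _ => h1nonneg i) ⟨i₀', Finset.mem_univ _,
        mul_pos_of_neg_of_neg hlt ((hw₁ i₀').1 (le_of_lt hlt))⟩
    have : (0:ℝ) < -β := hE₁ ▸ this
    have h2 : (∑ i : Fin n, γ i * (w₂ ⬝ᵥ phiF (pt i))) ≤ 0 :=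
      Finset.sum_nonpos fun i _ => h2nonpos i
    rw [hE₂] at h2
    linarith
  · exact hγi₀ heq
  · have : ∑ i : Fin n, γ i * (w₂ ⬝ᵥ phiF (pt i)) < 0 := by
      have := Finset.sum_pos' (f := fun i => -(γ i * (w₂ ⬝ᵥ phiF (pt i))))
        (fun i _ => neg_nonneg.2 (h2nonpos i))
        ⟨i₀', Finset.mem_univ _, by
          simpa using mul_neg_of_pos_of_neg hgt ((hw₂ i₀').1 hgt)⟩
      rw [Finset.sum_neg_distrib] at this
      linarith
    have h1 : 0 ≤ ∑ i : Fin n, γ i * (w₁ ⬝ᵥ phiF (pt i)) :=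
      Finset.sum_nonneg fun i _ => h1nonneg i
    rw [hE₁] at h1
    rw [hE₂] at this
    linarith
lemma dot_sum {ι κ : Type*} [Fintype κ] (s : Finset ι) (w : κ → ℝ) (f : ι → κ → ℝ) :
    w ⬝ᵥ (∑ i ∈ s, f i) = ∑ i ∈ s, w ⬝ᵥ f i := by
  simp only [dotProduct, Finset.sum_apply, Finset.mul_sum]
  exact Finset.sum_comm

lemma posDef_of {A : Matrix (Fin d) (Fin d) ℝ} (hsym : Aᵀ = A)
    (h : ∀ x : Fin d → ℝ, x ≠ 0 → 0 < x ⬝ᵥ A.mulVec x) : A.PosDef := by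
  refine posDef_iff_dotProduct_mulVec.mpr ⟨?_, ?_⟩
  · rw [Matrix.IsHermitian, conjTranspose_eq_transpose_of_trivial, hsym]
  · intro x hx
    simpa using h x hx

noncomputable def matOf (w : QIdx d → ℝ) : Matrix (Fin d) (Fin d) ℝ := fun i j =>
  if h : i = j then w (.inl ⟨(i, i), le_refl _⟩)
  else if h' : i ≤ j then w (.inl ⟨(i, j), h'⟩) / 2
  else w (.inl ⟨(j, i), le_of_not_ge h'⟩) / 2

def linOf (w : QIdx d → ℝ) : Fin d → ℝ := fun i => w (.inr (.inl i))

def constOf (w : QIdx d → ℝ) : ℝ := w (.inr (.inr ()))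

lemma matOf_symm (w : QIdx d → ℝ) : (matOf w)ᵀ = matOf w := by
  ext i j
  simp only [Matrix.transpose_apply, matOf]
  by_cases h : i = j
  · subst h; rfl
  · have h' : ¬ j = i := fun hji => h hji.symm
    rw [dif_neg h', dif_neg h]
    by_cases hle : i ≤ j
    · have hnle : ¬ j ≤ i := fun hji => h (le_antisymm hle hji)
      rw [dif_neg hnle, dif_pos hle]
    · rw [dif_pos (le_of_not_ge hle), dif_neg hle]

lemma coeffs_matOf (w : QIdx d → ℝ) :
    coeffs (matOf w) (linOf w) (constOf w) = w := by
  funext k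
  match k with
  | .inl ⟨(i, j), hle⟩ =>
    by_cases h : i = j
    · subst h
      show (if i = i then matOf w i i else matOf w i i + matOf w i i) = _
      rw [if_pos rfl]
      show (if h : i = i then w (.inl ⟨(i, i), le_refl _⟩) else _) = _
      rw [dif_pos rfl]
    · have hlt : ¬ j ≤ i := fun hji => h (le_antisymm hle hji)
      have h' : ¬ j = i := fun hji => h hji.symm
      show (if i = j then matOf w i i else matOf w i j + matOf w j i) = _
      rw [if_neg h]
      show ((if h : i = j then _ else if h' : i ≤ j then w (.inl ⟨(i, j), h'⟩) / 2 else _) +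
        (if h : j = i then _ else if h' : j ≤ i then _ else w (.inl ⟨(i, j), le_of_not_ge h'⟩) / 2)) = _
      rw [dif_neg h, dif_pos hle, dif_neg h', dif_neg hlt]
      ring
  | .inr (.inl i) => rfl
  | .inr (.inr u) => rfl

lemma wdot_eq (w : QIdx d → ℝ) (x : Fin d → ℝ) :
    w ⬝ᵥ phiF x = x ⬝ᵥ (matOf w).mulVec x + linOf w ⬝ᵥ x + constOf w := by
  conv_lhs => rw [← coeffs_matOf w]
  exact coeffs_dot_phi (matOf w) (matOf_symm w) (linOf w) (constOf w) x

def wSphere (d : ℕ) : QIdx d → ℝ := coeffs (1 : Matrix (Fin d) (Fin d) ℝ) 0 (-1)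

lemma wSphere_ne_zero (hd : 0 < d) : wSphere d ≠ 0 := by
  intro h
  have := congrFun h (.inl ⟨(⟨0, hd⟩, ⟨0, hd⟩), le_refl _⟩)
  simp [wSphere, coeffs] at this

lemma single_dot_single (i j : Fin d) :
    (Pi.single i (1:ℝ)) ⬝ᵥ (Pi.single j (1:ℝ)) = if i = j then 1 else 0 := by
  rw [dotProduct_single, mul_one, Pi.single_apply]
  exact if_congr eq_comm rfl rfl

lemma quad_single (A : Matrix (Fin d) (Fin d) ℝ) (i j : Fin d) :
    (Pi.single i (1:ℝ)) ⬝ᵥ A.mulVec (Pi.single j (1:ℝ)) = A i j := by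
  rw [mulVec_single]
  rw [single_dotProduct]
  simp

lemma vanish (w : QIdx d → ℝ)
    (hv : ∀ x : Fin d → ℝ, x ⬝ᵥ x = 1 → w ⬝ᵥ phiF x = 0) :
    w = (-(constOf w)) • wSphere d := by
  set A := matOf w with hA
  set b := linOf w with hb
  set c0 := constOf w with hc0
  have hq : ∀ x : Fin d → ℝ, x ⬝ᵥ x = 1 →
      x ⬝ᵥ A.mulVec x + b ⬝ᵥ x + c0 = 0 := by
    intro x hx
    rw [← wdot_eq]
    exact hv x hx
  -- evaluate at ± basis vectors
  have hsingle : ∀ i : Fin d, A i i + b i + c0 = 0 := by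
    intro i
    have := hq (Pi.single i 1) (by rw [single_dot_single, if_pos rfl])
    rwa [quad_single, dotProduct_single, mul_one] at this
  have hsingle' : ∀ i : Fin d, A i i - b i + c0 = 0 := by
    intro i
    have h1 : (-(Pi.single i (1:ℝ))) ⬝ᵥ (-(Pi.single i (1:ℝ))) = 1 := by
      rw [neg_dotProduct, dotProduct_neg, neg_neg, single_dot_single, if_pos rfl]
    have := hq _ h1
    rw [Matrix.mulVec_neg, neg_dotProduct, dotProduct_neg, neg_neg, quad_single,
      dotProduct_neg, dotProduct_single, mul_one] at this
    linarith
  have hbzero : ∀ i, b i = 0 := fun i => by linarith [hsingle i, hsingle' i]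
  have hdiag : ∀ i, A i i = -c0 := fun i => by linarith [hsingle i, hsingle' i]
  -- evaluate at scaled pair vectors
  have hoff : ∀ i j : Fin d, i ≠ j → A i j + A j i = 0 := by
    intro i j hij
    set s : ℝ := (Real.sqrt 2)⁻¹ with hs
    have hss : s * s = 1/2 := by
      rw [hs, ← mul_inv]
      rw [Real.mul_self_sqrt (by norm_num)]
      norm_num
    set v : Fin d → ℝ := Pi.single i 1 + Pi.single j 1 with hv'
    have hvv : v ⬝ᵥ v = 2 := by
      rw [hv', dotProduct_add, add_dotProduct, add_dotProduct, single_dot_single,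
        single_dot_single, single_dot_single, single_dot_single, if_pos rfl, if_pos rfl,
        if_neg hij, if_neg (fun h : j = i => hij h.symm)]
      norm_num
    have huu : (s • v) ⬝ᵥ (s • v) = 1 := by
      rw [smul_dotProduct, dotProduct_smul, hvv, smul_eq_mul, smul_eq_mul]
      rw [show s * (s * 2) = (s * s) * 2 by ring, hss]
      norm_num
    have hqv : v ⬝ᵥ A.mulVec v = A i i + A i j + A j i + A j j := by
      rw [hv', Matrix.mulVec_add, dotProduct_add, add_dotProduct, add_dotProduct,
        quad_single, quad_single, quad_single, quad_single]
      ring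
    have hbv : b ⬝ᵥ v = 0 := by
      rw [hv', dotProduct_add, dotProduct_single, dotProduct_single, hbzero, hbzero]
      norm_num
    have := hq (s • v) huu
    rw [Matrix.mulVec_smul, smul_dotProduct, dotProduct_smul, dotProduct_smul, hqv, hbv,
      smul_eq_mul, smul_eq_mul, smul_eq_mul] at this
    rw [show s * (s * (A i i + A i j + A j i + A j j)) =
        (s * s) * (A i i + A i j + A j i + A j j) by ring, hss] at this
    rw [hdiag i, hdiag j] at this
    linarith
  -- conclude
  funext k
  match k with
  | .inl ⟨(i, j), hle⟩ =>
    have hcomp := congrFun (coeffs_matOf w) (.inl ⟨(i, j), hle⟩)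
    by_cases h : i = j
    · subst h
      rw [← hcomp, Pi.smul_apply, smul_eq_mul]
      show (if i = i then matOf w i i else matOf w i i + matOf w i i)
          = -c0 * (if i = i then (1 : Matrix (Fin d) (Fin d) ℝ) i i
              else (1 : Matrix (Fin d) (Fin d) ℝ) i i + (1 : Matrix (Fin d) (Fin d) ℝ) i i)
      rw [if_pos rfl, if_pos rfl, ← hA, hdiag i, Matrix.one_apply_eq]
      ring
    · rw [← hcomp, Pi.smul_apply, smul_eq_mul]
      show (if i = j then matOf w i i else matOf w i j + matOf w j i)
          = -c0 * (if i = j then (1 : Matrix (Fin d) (Fin d) ℝ) i i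
              else (1 : Matrix (Fin d) (Fin d) ℝ) i j + (1 : Matrix (Fin d) (Fin d) ℝ) j i)
      rw [if_neg h, if_neg h, ← hA, hoff i j h, Matrix.one_apply_ne h,
        Matrix.one_apply_ne (fun h' : j = i => h h'.symm)]
      ring
  | .inr (.inl i) =>
    have hcomp := congrFun (coeffs_matOf w) (.inr (.inl i))
    rw [← hcomp, Pi.smul_apply, smul_eq_mul]
    show linOf w i = -c0 * (0 : Fin d → ℝ) i
    rw [Pi.zero_apply, mul_zero]
    exact hbzero i
  | .inr (.inr u) =>
    have hcomp := congrFun (coeffs_matOf w) (.inr (.inr u))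
    rw [← hcomp, Pi.smul_apply, smul_eq_mul]
    show c0 = -c0 * (-1)
    ring
def dotL {κ : Type*} [Fintype κ] (u : κ → ℝ) : (κ → ℝ) →ₗ[ℝ] ℝ where
  toFun w := u ⬝ᵥ w
  map_add' x y := dotProduct_add u x y
  map_smul' c x := by
    simp only [RingHom.id_apply, smul_eq_mul, dotProduct, Pi.smul_apply, smul_eq_mul,
      Finset.mul_sum]
    exact Finset.sum_congr rfl fun i _ => by ring

lemma exists_dual {k : ℕ} (v : Fin k → (QIdx d → ℝ)) (hv : LinearIndependent ℝ v)
    (t : Fin k → ℝ) : ∃ w : QIdx d → ℝ, ∀ m, w ⬝ᵥ v m = t m := by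
  classical
  set G : Matrix (Fin k) (Fin k) ℝ := Matrix.of (fun i j => v i ⬝ᵥ v j) with hG
  have hGapp : ∀ i j, G i j = v i ⬝ᵥ v j := fun i j => rfl
  have hmv : ∀ (c : Fin k → ℝ) (i : Fin k), G.mulVec c i = ∑ j, (v i ⬝ᵥ v j) * c j := by
    intro c i
    simp [Matrix.mulVec, dotProduct, hGapp]
  have hker : ∀ c : Fin k → ℝ, G.mulVec c = 0 → c = 0 := by
    intro c hc
    have hu : (∑ j, c j • v j) ⬝ᵥ (∑ j, c j • v j) = 0 := by
      rw [sum_dot]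
      have hterm : ∀ i : Fin k, (c i • v i) ⬝ᵥ (∑ j, c j • v j) = c i * (G.mulVec c i) := by
        intro i
        rw [smul_dotProduct, dot_sum, smul_eq_mul, hmv]
        congr 1
        refine Finset.sum_congr rfl fun j _ => ?_
        rw [dotProduct_smul, smul_eq_mul]
        ring
      rw [Finset.sum_congr rfl fun i _ => hterm i]
      simp [hc]
    have hzero : (∑ j, c j • v j) = 0 := dotProduct_self_eq_zero.mp hu
    funext i
    exact Fintype.linearIndependent_iff.1 hv c hzero i
  have hinj : Function.Injective (Matrix.toLin' G) := by
    rw [← LinearMap.ker_eq_bot, LinearMap.ker_eq_bot']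
    intro c hc
    exact hker c (by rwa [Matrix.toLin'_apply] at hc)
  obtain ⟨c, hc⟩ := (LinearMap.injective_iff_surjective.1 hinj) t
  rw [Matrix.toLin'_apply] at hc
  refine ⟨∑ j, c j • v j, fun m => ?_⟩
  rw [sum_dot]
  have : ∀ j, (c j • v j) ⬝ᵥ v m = G m j * c j := by
    intro j
    rw [smul_dotProduct, smul_eq_mul, hGapp, dotProduct_comm]
    ring
  rw [Finset.sum_congr rfl fun j _ => this j]
  have := congrFun hc m
  rw [hmv] at this
  rw [← this]
  exact Finset.sum_congr rfl fun j _ => by rw [hGapp]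

lemma exists_indep_points (hd : 0 < d) :
    ∀ k, k ≤ d * (d + 1) / 2 + d → ∃ y : Fin k → (Fin d → ℝ),
      (∀ m, y m ⬝ᵥ y m = 1) ∧ LinearIndependent ℝ (fun m => phiF (y m)) := by
  intro k
  induction k with
  | zero =>
    intro _
    exact ⟨Fin.elim0, fun m => m.elim0, linearIndependent_empty_type⟩
  | succ k ih =>
    intro hk
    obtain ⟨y, hy1, hy2⟩ := ih (Nat.le_of_succ_le hk)
    have hnew : ∃ x : Fin d → ℝ, x ⬝ᵥ x = 1 ∧
        phiF x ∉ Submodule.span ℝ (Set.range fun m => phiF (y m)) := by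
      by_contra hall
      push_neg at hall
      set L : (QIdx d → ℝ) →ₗ[ℝ] (Fin k → ℝ) :=
        LinearMap.pi (fun m => dotL (phiF (y m))) with hL
      have h1 := LinearMap.finrank_range_add_finrank_ker L
      have h2 : Module.finrank ℝ (LinearMap.range L) ≤ k :=
        le_trans (Submodule.finrank_le _) (le_of_eq (by rw [Module.finrank_pi, Fintype.card_fin]))
      rw [Module.finrank_pi] at h1
      have hsub : LinearMap.ker L ≤ Submodule.span ℝ {wSphere d} := by
        intro w hw
        rw [LinearMap.mem_ker] at hw
        have hgen : ∀ u ∈ Submodule.span ℝ (Set.range fun m => phiF (y m)), u ⬝ᵥ w = 0 := by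
          intro u hu
          induction hu using Submodule.span_induction with
          | mem u hu =>
            obtain ⟨m, rfl⟩ := hu
            have := congrFun hw m
            simpa [hL, LinearMap.pi_apply, dotL] using this
          | zero => exact zero_dotProduct w
          | add u₁ u₂ _ _ h₁ h₂ => rw [add_dotProduct, h₁, h₂, add_zero]
          | smul a u _ h => rw [smul_dotProduct, h, smul_zero]
        have hvan : ∀ x : Fin d → ℝ, x ⬝ᵥ x = 1 → w ⬝ᵥ phiF x = 0 := fun x hx => by
          rw [dotProduct_comm]
          exact hgen _ (hall x hx)
        rw [vanish w hvan]
        exact Submodule.smul_mem _ _ (Submodule.mem_span_singleton_self _)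
      have hle1 : Module.finrank ℝ (LinearMap.ker L) ≤ 1 := by
        calc Module.finrank ℝ (LinearMap.ker L)
            ≤ Module.finrank ℝ (Submodule.span ℝ {wSphere d}) := Submodule.finrank_mono hsub
          _ = 1 := by
              rw [show Submodule.span ℝ {wSphere d} = ℝ ∙ wSphere d from rfl,
                finrank_span_singleton (wSphere_ne_zero hd)]
      have hcard : Fintype.card (QIdx d) = d * (d + 1) / 2 + d + 1 := card_QIdx
      omega
    obtain ⟨x, hx1, hx2⟩ := hnew
    refine ⟨Fin.cons (α := fun _ => Fin d → ℝ) x y, fun m => ?_, ?_⟩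
    · induction m using Fin.cases with
      | zero => simpa using hx1
      | succ m => simpa using hy1 m
    · have hfun : (fun m : Fin (k+1) => phiF (Fin.cons (α := fun _ => Fin d → ℝ) x y m)) =
          Fin.cons (phiF x) (fun m => phiF (y m)) := by
        funext m
        induction m using Fin.cases with
        | zero => simp
        | succ m => simp
      rw [hfun, linearIndependent_fin_cons]
      exact ⟨hy2, hx2⟩

lemma ellipsoid_sublevel (A : Matrix (Fin d) (Fin d) ℝ) (hA : A.PosDef) (b : Fin d → ℝ) (c : ℝ)
    (x₀ : Fin d → ℝ) (hneg : x₀ ⬝ᵥ A.mulVec x₀ + b ⬝ᵥ x₀ + c < 0) :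
    IsEllipsoid {x : Fin d → ℝ | x ⬝ᵥ A.mulVec x + b ⬝ᵥ x + c < 0} := by
  classical
  have hsym : Aᵀ = A := by
    have h := hA.1
    rwa [Matrix.IsHermitian, conjTranspose_eq_transpose_of_trivial] at h
  have hdet : IsUnit A.det := isUnit_iff_ne_zero.2 (ne_of_gt hA.det_pos)
  set μ : Fin d → ℝ := (-(1/2) : ℝ) • (A⁻¹.mulVec b) with hμ
  have hAμ : A.mulVec μ = (-(1/2) : ℝ) • b := by
    rw [hμ, Matrix.mulVec_smul, Matrix.mulVec_mulVec, Matrix.mul_nonsing_inv _ hdet,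
      Matrix.one_mulVec]
  have hmulsym : ∀ z : Fin d → ℝ, μ ⬝ᵥ A.mulVec z = (A.mulVec μ) ⬝ᵥ z := by
    intro z
    rw [dotProduct_mulVec]
    congr 1
    conv_lhs => rw [← hsym, vecMul_transpose]
  have hkey : ∀ x : Fin d → ℝ, x ⬝ᵥ A.mulVec x + b ⬝ᵥ x + c =
      (x - μ) ⬝ᵥ A.mulVec (x - μ) + (c - μ ⬝ᵥ A.mulVec μ) := by
    intro x
    rw [Matrix.mulVec_sub, dotProduct_sub, sub_dotProduct, sub_dotProduct, hmulsym x]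
    rw [show x ⬝ᵥ A.mulVec μ = (A.mulVec μ) ⬝ᵥ x from dotProduct_comm _ _]
    rw [hAμ, smul_dotProduct, smul_eq_mul]
    ring
  set m : ℝ := c - μ ⬝ᵥ A.mulVec μ with hm
  have hm0 : m < 0 := by
    have h0 := hkey x₀
    have hpsd : 0 ≤ (x₀ - μ) ⬝ᵥ A.mulVec (x₀ - μ) := by
      have := hA.posSemidef.dotProduct_mulVec_nonneg (x₀ - μ)
      simpa using this
    linarith
  have hmpos : 0 < -m := by linarith
  set A' : Matrix (Fin d) (Fin d) ℝ := (-m)⁻¹ • A with hA'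
  have hA'pd : A'.PosDef := by
    apply posDef_of
    · rw [hA', Matrix.transpose_smul, hsym]
    · intro x hx
      rw [hA', Matrix.smul_mulVec, dotProduct_smul, smul_eq_mul]
      have := hA.dotProduct_mulVec_pos hx
      simp only [star_trivial] at this
      exact mul_pos (inv_pos.2 hmpos) this
  refine ⟨μ, A', hA'pd, ?_⟩
  ext x
  simp only [Set.mem_setOf_eq]
  rw [hkey x, hA', Matrix.smul_mulVec, dotProduct_smul, smul_eq_mul]
  constructor
  · intro h
    have hQ : (x - μ) ⬝ᵥ A.mulVec (x - μ) < -m := by linarith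
    calc (-m)⁻¹ * ((x - μ) ⬝ᵥ A.mulVec (x - μ)) < (-m)⁻¹ * (-m) :=
          (mul_lt_mul_iff_right₀ (inv_pos.2 hmpos)).2 hQ
      _ = 1 := inv_mul_cancel₀ (ne_of_gt hmpos)
  · intro h
    have hQ : (-m)⁻¹ * ((x - μ) ⬝ᵥ A.mulVec (x - μ)) < (-m)⁻¹ * (-m) := by
      rw [inv_mul_cancel₀ (ne_of_gt hmpos)]
      exact h
    have := (mul_lt_mul_iff_right₀ (inv_pos.2 hmpos)).1 hQ
    linarith
lemma dotProduct_self_nonneg (x : Fin d → ℝ) : 0 ≤ x ⬝ᵥ x := by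
  rw [dotProduct]
  exact Finset.sum_nonneg fun i _ => mul_self_nonneg _

lemma exists_shattered (hd : 0 < d) : ∃ X : Finset (Fin d → ℝ),
    X.card = d * (d + 1) / 2 + d ∧
      Shatters {E : Set (Fin d → ℝ) | IsEllipsoid E} (X : Set (Fin d → ℝ)) := by
  classical
  set D := d * (d + 1) / 2 + d with hD
  obtain ⟨y, hy1, hy2⟩ := exists_indep_points hd D le_rfl
  have hyinj : Function.Injective y := by
    intro a b hab
    exact hy2.injective (by rw [show phiF (y a) = phiF (y b) from by rw [hab]] : _)
  set X : Finset (Fin d → ℝ) := Finset.image y Finset.univ with hX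
  have hcard : X.card = D := by
    rw [hX, Finset.card_image_of_injective _ hyinj, Finset.card_univ, Fintype.card_fin]
  refine ⟨X, hcard, ?_⟩
  intro Y hY
  have hmemX : ∀ z, z ∈ (X : Set (Fin d → ℝ)) ↔ ∃ m, y m = z := by
    intro z
    simp [hX]
  by_cases hYe : Y = ∅
  · -- far away ball
    set i0 : Fin d := ⟨0, hd⟩ with hi0
    set μ₀ : Fin d → ℝ := Pi.single i0 (3:ℝ) with hμ₀
    refine ⟨{x | (x - μ₀) ⬝ᵥ (1 : Matrix (Fin d) (Fin d) ℝ).mulVec (x - μ₀) < 1},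
      ⟨μ₀, 1, Matrix.PosDef.one, rfl⟩, ?_⟩
    subst hYe
    symm
    rw [Set.eq_empty_iff_forall_notMem]
    rintro z ⟨hzX, hzB⟩
    obtain ⟨m, rfl⟩ := (hmemX z).1 hzX
    have hsph : y m ⬝ᵥ y m = 1 := hy1 m
    have hxi : y m i0 * y m i0 ≤ 1 := by
      rw [← hsph, dotProduct]
      exact Finset.single_le_sum (f := fun j => y m j * y m j)
        (fun j _ => mul_self_nonneg _) (Finset.mem_univ i0)
    have hcompute : (y m - μ₀) ⬝ᵥ (1 : Matrix (Fin d) (Fin d) ℝ).mulVec (y m - μ₀) =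
        y m ⬝ᵥ y m - 2 * (3 * y m i0) + 9 := by
      rw [Matrix.one_mulVec, dotProduct_sub, sub_dotProduct, sub_dotProduct, hμ₀]
      rw [dotProduct_single, single_dotProduct, single_dotProduct,
        Pi.single_eq_same]
      ring
    rw [Set.mem_setOf_eq, hcompute, hsph] at hzB
    nlinarith [hzB, hxi]
  · -- nonempty subset: perturbed sphere
    set t : Fin D → ℝ := fun m => if y m ∈ Y then -1 else 1 with ht
    obtain ⟨w, hwv⟩ := exists_dual (fun m => phiF (y m)) hy2 t
    set P := matOf w with hP
    set C : ℝ := ∑ i : Fin d, ∑ j : Fin d, |P i j| with hC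
    have hCnn : 0 ≤ C :=
      Finset.sum_nonneg fun i _ => Finset.sum_nonneg fun j _ => abs_nonneg _
    set ε : ℝ := (2 * (C + 1))⁻¹ with hε
    have hεpos : 0 < ε := by
      rw [hε]
      apply inv_pos.2
      nlinarith
    have hεC : ε * C ≤ 1/2 := by
      rw [hε]
      rw [div_eq_mul_inv, show (2 * (C + 1))⁻¹ * C = C / (2 * (C + 1)) by ring,
        div_le_iff₀ (by nlinarith : (0:ℝ) < 2 * (C + 1))]
      nlinarith
    set Atot : Matrix (Fin d) (Fin d) ℝ := 1 + ε • P with hAtot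
    set btot : Fin d → ℝ := ε • linOf w with hbtot
    set ctot : ℝ := ε * constOf w - 1 with hctot
    have hq : ∀ x : Fin d → ℝ, x ⬝ᵥ Atot.mulVec x + btot ⬝ᵥ x + ctot =
        (x ⬝ᵥ x - 1) + ε * (w ⬝ᵥ phiF x) := by
      intro x
      rw [hAtot, Matrix.add_mulVec, Matrix.one_mulVec, dotProduct_add,
        Matrix.smul_mulVec, dotProduct_smul, hbtot, smul_dotProduct, hctot,
        wdot_eq w x, smul_eq_mul, smul_eq_mul, ← hP]
      ring
    have hbound : ∀ x : Fin d → ℝ, |x ⬝ᵥ P.mulVec x| ≤ C * (x ⬝ᵥ x) := by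
      intro x
      set s := x ⬝ᵥ x with hs
      have hsnn : 0 ≤ s := dotProduct_self_nonneg x
      have hxi : ∀ i, x i * x i ≤ s := fun i =>
        Finset.single_le_sum (f := fun j => x j * x j)
          (fun j _ => mul_self_nonneg _) (Finset.mem_univ i)
      have habs : ∀ i j, |x i * x j| ≤ s := by
        intro i j
        rw [abs_le]
        constructor <;> nlinarith [hxi i, hxi j]
      have hexpand : x ⬝ᵥ P.mulVec x = ∑ i, ∑ j, x i * (P i j * x j) := by
        simp [dotProduct, Matrix.mulVec, Finset.mul_sum]
      rw [hexpand]
      calc |∑ i, ∑ j, x i * (P i j * x j)| ≤ ∑ i, |∑ j, x i * (P i j * x j)| :=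
            Finset.abs_sum_le_sum_abs _ _
        _ ≤ ∑ i, ∑ j, |x i * (P i j * x j)| :=
            Finset.sum_le_sum fun i _ => Finset.abs_sum_le_sum_abs _ _
        _ ≤ ∑ i, ∑ j, |P i j| * s := by
            refine Finset.sum_le_sum fun i _ => Finset.sum_le_sum fun j _ => ?_
            rw [show x i * (P i j * x j) = P i j * (x i * x j) by ring, abs_mul]
            exact mul_le_mul_of_nonneg_left (habs i j) (abs_nonneg _)
        _ = C * s := by
            rw [hC, Finset.sum_mul]
            exact Finset.sum_congr rfl fun i _ => (Finset.sum_mul _ _ _).symm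
    have hPD : Atot.PosDef := by
      apply posDef_of
      · rw [hAtot, Matrix.transpose_add, Matrix.transpose_one, Matrix.transpose_smul, hP,
          matOf_symm]
      · intro x hx
        have hsnn : 0 ≤ x ⬝ᵥ x := dotProduct_self_nonneg x
        have hspos : 0 < x ⬝ᵥ x := by
          rcases lt_or_eq_of_le hsnn with h | h
          · exact h
          · exact absurd (dotProduct_self_eq_zero.mp h.symm) hx
        have hQ := hbound x
        rw [hAtot, Matrix.add_mulVec, Matrix.one_mulVec, dotProduct_add,
          Matrix.smul_mulVec, dotProduct_smul, smul_eq_mul]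
        have h1 : (ε * C) * (x ⬝ᵥ x) ≤ (1/2) * (x ⬝ᵥ x) :=
          mul_le_mul_of_nonneg_right hεC hsnn
        have h2 : -(C * (x ⬝ᵥ x)) ≤ x ⬝ᵥ P.mulVec x := by
          have h3 := (abs_le.1 hQ).1
          linarith
        nlinarith [mul_le_mul_of_nonneg_left h2 hεpos.le, h1, hspos]
    -- the cutting ellipsoid
    obtain ⟨z₀, hz₀⟩ := Set.nonempty_iff_ne_empty.2 hYe
    obtain ⟨m₀, hm₀⟩ := (hmemX z₀).1 (hY hz₀)
    have hval : ∀ m : Fin D, y m ⬝ᵥ Atot.mulVec (y m) + btot ⬝ᵥ y m + ctot =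
        if y m ∈ Y then -ε else ε := by
      intro m
      rw [hq (y m), hy1 m, hwv m, ht]
      by_cases h : y m ∈ Y <;> simp [h]
    have hneg : y m₀ ⬝ᵥ Atot.mulVec (y m₀) + btot ⬝ᵥ y m₀ + ctot < 0 := by
      rw [hval m₀, if_pos (hm₀ ▸ hz₀)]
      linarith
    refine ⟨{x : Fin d → ℝ | x ⬝ᵥ Atot.mulVec x + btot ⬝ᵥ x + ctot < 0},
      ellipsoid_sublevel Atot hPD btot ctot (y m₀) hneg, ?_⟩
    ext z
    constructor
    · intro hz
      obtain ⟨m, rfl⟩ := (hmemX z).1 (hY hz)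
      refine ⟨hY hz, ?_⟩
      rw [Set.mem_setOf_eq, hval m, if_pos hz]
      linarith
    · rintro ⟨hzX, hzB⟩
      obtain ⟨m, rfl⟩ := (hmemX _).1 hzX
      rw [Set.mem_setOf_eq, hval m] at hzB
      by_contra hzY
      rw [if_neg hzY] at hzB
      linarith
end Aux2

/-- The VC dimension of the class of `d`-dimensional ellipsoids is `(d² + 3d)/2`. -/
theorem vcDim_ellipsoids (d : ℕ) (hd : 0 < d) :
    vcDim {E : Set (Fin d → ℝ) | IsEllipsoid E} = ((d ^ 2 + 3 * d) / 2 : ℕ) := by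
  have hDeq : d * (d + 1) / 2 + d = (d ^ 2 + 3 * d) / 2 := by
    rcases Nat.even_mul_succ_self d with ⟨k, hk⟩
    have hsq : d ^ 2 + d = d * (d + 1) := by ring
    omega
  apply le_antisymm
  · simp only [_root_.vcDim]
    refine iSup_le fun X => iSup_le fun hX => ?_
    exact_mod_cast card_le_of_shatters hd X hX
  · obtain ⟨X, hXcard, hXsh⟩ := exists_shattered hd
    simp only [_root_.vcDim]
    have h := le_iSup₂ (f := fun (X : Finset (Fin d → ℝ))
      (_ : Shatters {E : Set (Fin d → ℝ) | IsEllipsoid E} (X : Set (Fin d → ℝ))) =>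
        (X.card : ℕ∞)) X hXsh
    rw [hXcard, hDeq] at h
    exact_mod_cast h
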